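/- For any nonzero integer a and any integer n ≥ 2, E_{2n,a} ≡ 2a^2 - a - 2a^3 n (mod 8), and E_{2n,a} ≡ a·(2a-1)^{-1} - 2n(2n-1)a^3 (mod 16), where (2a-1)^{-1} denotes the inverse of 2a-1 modulo 16. -/

import Mathlib

open Finset

def EZ (a : ℤ) : ℕ → ℤ
  | 0 => 1
  | n + 1 =>
      -a * ∑ k ∈ (Finset.Icc 1 ((n + 1) / 2)).attach,
        ((n + 1).choose (2 * k.1) : ℤ) * EZ a (n + 1 - 2 * k.1)
  decreasing_by
    have h := Finset.mem_Icc.mp k.2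
    omega

lemma EZ_rec (a : ℤ) (m : ℕ) :
    EZ a (m + 1) = -a * ∑ k ∈ Finset.Icc 1 ((m + 1) / 2),
      ((m + 1).choose (2 * k) : ℤ) * EZ a (m + 1 - 2 * k) := by
  rw [EZ]
  congr 1
  exact Finset.sum_attach (Finset.Icc 1 ((m + 1) / 2)) (fun k => ((m + 1).choose (2 * k) : ℤ) * EZ a (m + 1 - 2 * k))

lemma EZ_even_rec (a : ℤ) (n : ℕ) (hn : 1 ≤ n) :
    EZ a (2 * n) = -a * ∑ j ∈ Finset.range n,
      ((2 * n).choose (2 * j) : ℤ) * EZ a (2 * j) := by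
  obtain ⟨m, hm⟩ : ∃ m, 2 * n = m + 1 := ⟨2 * n - 1, by omega⟩
  rw [hm, EZ_rec]
  congr 1
  have h2 : (m + 1) / 2 = n := by omega
  rw [h2, ← hm]
  refine Finset.sum_nbij' (fun k => n - k) (fun j => n - j) ?_ ?_ ?_ ?_ ?_
  · intro k hk; have := Finset.mem_Icc.mp hk; simp only [Finset.mem_range]; omega
  · intro j hj; have := Finset.mem_range.mp hj; simp only [Finset.mem_Icc]; omega
  · intro k hk; have := Finset.mem_Icc.mp hk; show n - (n - k) = k; omega
  · intro j hj; have := Finset.mem_range.mp hj; show n - (n - j) = j; omega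
  · intro k hk
    have hk' := Finset.mem_Icc.mp hk
    have h1 : 2 * n - 2 * k = 2 * (n - k) := by omega
    have h3 : 2 * k = 2 * n - 2 * (n - k) := by omega
    rw [h1, h3, Nat.choose_symm (by omega)]

lemma EZ_zero (a : ℤ) : EZ a 0 = 1 := by rw [EZ]

lemma EZ_two (a : ℤ) : EZ a 2 = -a := by
  have := EZ_even_rec a 1 le_rfl
  simp [Finset.sum_range_succ, EZ_zero] at this
  simpa using this

lemma EZ_four (a : ℤ) : EZ a 4 = 6 * a ^ 2 - a := by
  have := EZ_even_rec a 2 (by omega)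
  simp [Finset.sum_range_succ, EZ_zero, EZ_two, Nat.choose] at this
  rw [show (4:ℕ) = 2*2 by rfl, this]; ring

lemma EZ_six (a : ℤ) : EZ a 6 = -90 * a ^ 3 + 30 * a ^ 2 - a := by
  have := EZ_even_rec a 3 (by omega)
  simp [Finset.sum_range_succ, EZ_zero, EZ_two, EZ_four, Nat.choose] at this
  rw [show (6:ℕ) = 2*3 by rfl, this]; ring

lemma choose_mul_two (m i : ℕ) :
    (m + 2).choose (i + 2) * ((i + 2) * (i + 1)) = (m + 2) * (m + 1) * m.choose i := by
  have h1 := Nat.add_one_mul_choose_eq (m + 1) (i + 1)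
  have h2 := Nat.add_one_mul_choose_eq m i
  calc (m + 2).choose (i + 2) * ((i + 2) * (i + 1))
      = ((m + 2).choose (i + 2) * (i + 2)) * (i + 1) := by ring
    _ = ((m + 2) * (m + 1).choose (i + 1)) * (i + 1) := by rw [← h1]
    _ = (m + 2) * ((m + 1).choose (i + 1) * (i + 1)) := by ring
    _ = (m + 2) * ((m + 1) * m.choose i) := by rw [← h2]
    _ = (m + 2) * (m + 1) * m.choose i := by ring

lemma sum_even_choose (n : ℕ) (hn : 1 ≤ n) :
    ∑ j ∈ Finset.range (n + 1), ((2 * n).choose (2 * j) : ℤ) = 2 ^ (2 * n - 1) := by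
  set f : ℕ → ℤ := fun i => ((1 : ℤ) + (-1) ^ i) * ((2 * n).choose i) with hf
  have htot : ∑ i ∈ Finset.range (2 * n + 1), (((2 * n).choose i : ℕ) : ℤ) = 2 ^ (2 * n) := by
    have := Nat.sum_range_choose (2 * n)
    exact_mod_cast congrArg (fun x : ℕ => (x : ℤ)) this
  have halt : ∑ i ∈ Finset.range (2 * n + 1), (-1 : ℤ) ^ i * ((2 * n).choose i) = 0 := by
    rw [Int.alternating_sum_range_choose, if_neg (by omega)]
  have hcomb : ∑ i ∈ Finset.range (2 * n + 1), f i = 2 ^ (2 * n) := by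
    simp only [hf, add_mul, one_mul, Finset.sum_add_distrib, htot, halt, add_zero]
  have hsub : (Finset.range (n + 1)).image (fun j => 2 * j) ⊆ Finset.range (2 * n + 1) := by
    intro i hi
    simp only [Finset.mem_image, Finset.mem_range] at *
    obtain ⟨j, hj, rfl⟩ := hi; omega
  have h2 : ∑ i ∈ Finset.range (2 * n + 1), f i
      = ∑ i ∈ (Finset.range (n + 1)).image (fun j => 2 * j), f i := by
    refine (Finset.sum_subset hsub ?_).symm
    intro i hi hni
    simp only [Finset.mem_image, Finset.mem_range] at hi hni
    have hodd : Odd i := by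
      rcases Nat.even_or_odd i with he | ho
      · exfalso; obtain ⟨j, rfl⟩ := he; exact hni ⟨j, by omega, by omega⟩
      · exact ho
    simp [hf, hodd.neg_one_pow]
  have h3 : ∑ i ∈ (Finset.range (n + 1)).image (fun j => 2 * j), f i
      = ∑ j ∈ Finset.range (n + 1), f (2 * j) :=
    Finset.sum_image (fun a _ b _ h => by omega)
  have h4 : ∑ j ∈ Finset.range (n + 1), f (2 * j)
      = 2 * ∑ j ∈ Finset.range (n + 1), ((2 * n).choose (2 * j) : ℤ) := by
    rw [Finset.mul_sum]
    refine Finset.sum_congr rfl fun j _ => ?_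
    simp [hf, pow_mul]
  have : 2 * ∑ j ∈ Finset.range (n + 1), ((2 * n).choose (2 * j) : ℤ) = 2 * 2 ^ (2 * n - 1) := by
    rw [← h4, ← h3, ← h2, hcomb]
    have h5 : 2 * n = (2 * n - 1) + 1 := by omega
    conv_lhs => rw [h5]
    rw [pow_succ, mul_comm]
  exact mul_left_cancel₀ (by norm_num) this

lemma sum_even_choose_mul (m : ℕ) :
    ∑ j ∈ Finset.range (m + 3), ((2 * (m + 2)).choose (2 * j) : ℤ) * (2 * j) * (2 * j - 1)
      = 2 * (m + 2) * (2 * (m + 2) - 1) * 2 ^ (2 * m + 1) := by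
  rw [Finset.sum_range_succ']
  have hstep : ∀ j ∈ Finset.range (m + 2),
      ((2 * (m + 2)).choose (2 * (j + 1)) : ℤ) * (2 * ((j : ℕ) + 1 : ℕ)) * (2 * ((j : ℕ) + 1 : ℕ) - 1)
        = 2 * (m + 2) * (2 * (m + 2) - 1) * ((2 * (m + 1)).choose (2 * j) : ℤ) := by
    intro j _
    have key := choose_mul_two (2 * (m + 1)) (2 * j)
    have e1 : 2 * (m + 1) + 2 = 2 * (m + 2) := by ring
    have e2 : 2 * j + 2 = 2 * (j + 1) := by ring
    rw [e1, e2] at key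
    have keyZ : ((2 * (m + 2)).choose (2 * (j + 1)) : ℤ) * ((2 * (j : ℤ) + 2) * (2 * j + 1))
        = (2 * ((m : ℤ) + 2)) * (2 * (m + 1) + 1) * ((2 * (m + 1)).choose (2 * j) : ℤ) := by
      exact_mod_cast key
    push_cast
    linear_combination keyZ
  rw [Finset.sum_congr rfl hstep]
  have hA := sum_even_choose (m + 1) (by omega)
  have e3 : 2 * (m + 1) - 1 = 2 * m + 1 := by omega
  rw [e3] at hA
  rw [← Finset.mul_sum]
  have e4 : (m + 1) + 1 = m + 2 := by ring
  rw [e4] at hA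
  rw [hA]
  push_cast
  ring

lemma sum0_zmod (n : ℕ) (hn : 3 ≤ n) :
    ∑ j ∈ Finset.range (n + 1), (((2 * n).choose (2 * j) : ℕ) : ZMod 16) = 0 := by
  have h := congrArg (fun z : ℤ => (z : ZMod 16)) (sum_even_choose n (by omega))
  push_cast at h
  rw [h, show 2 * n - 1 = (2 * n - 5) + 4 by omega, pow_add,
    show ((2 : ZMod 16) ^ 4 = 0) from by decide, mul_zero]

lemma sum2_zmod (n : ℕ) (hn : 4 ≤ n) :
    ∑ j ∈ Finset.range (n + 1),
      (((2 * n).choose (2 * j) : ℕ) : ZMod 16) * (2 * (j : ZMod 16)) * (2 * (j : ZMod 16) - 1)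
      = 0 := by
  obtain ⟨m, rfl⟩ : ∃ m, n = m + 2 := ⟨n - 2, by omega⟩
  have h := congrArg (fun z : ℤ => (z : ZMod 16)) (sum_even_choose_mul m)
  push_cast at h
  rw [show m + 2 + 1 = m + 3 from rfl, h,
    show 2 * m + 1 = (2 * m - 3) + 4 by omega, pow_add,
    show ((2 : ZMod 16) ^ 4 = 0) from by decide]
  ring

lemma key (a : ℤ) : ∀ n : ℕ, 2 ≤ n →
    EZ a (2 * n) ≡ a * (2 * a - 1) ^ 3 - 2 * (n : ℤ) * (2 * (n : ℤ) - 1) * a ^ 3 [ZMOD 16] := by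
  intro n
  induction n using Nat.strong_induction_on with
  | _ n ih =>
  intro hn
  have hcast : ∀ x y : ℤ, x ≡ y [ZMOD (16 : ℤ)] ↔ (x : ZMod 16) = (y : ZMod 16) :=
    fun x y => (ZMod.intCast_eq_intCast_iff x y 16).symm
  rw [hcast]
  by_cases h2 : n = 2
  · subst h2
    rw [show 2 * 2 = 4 from rfl, EZ_four]
    push_cast
    have hid : ∀ A : ZMod 16,
        6 * A ^ 2 - A = A * (2 * A - 1) ^ 3 - 2 * 2 * (2 * 2 - 1) * A ^ 3 := by decide
    linear_combination hid (a : ZMod 16)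
  by_cases h3 : n = 3
  · subst h3
    rw [show 2 * 3 = 6 from rfl, EZ_six]
    push_cast
    have hid : ∀ A : ZMod 16,
        -90 * A ^ 3 + 30 * A ^ 2 - A
          = A * (2 * A - 1) ^ 3 - 2 * 3 * (2 * 3 - 1) * A ^ 3 := by decide
    linear_combination hid (a : ZMod 16)
  obtain ⟨k, rfl⟩ : ∃ k, n = k + 4 := ⟨n - 4, by omega⟩
  rw [EZ_even_rec a (k + 4) (by omega)]
  push_cast
  -- notation
  have hC1 : (2 * (k + 4)).choose 2 = (k + 4) * (2 * k + 7) := by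
    rw [show 2 * (k + 4) = 2 * k + 8 from by ring, Nat.choose_two_right,
      show 2 * k + 8 - 1 = 2 * k + 7 from by omega,
      show (2 * k + 8) * (2 * k + 7) = 2 * ((k + 4) * (2 * k + 7)) from by ring]
    exact Nat.mul_div_cancel_left _ (by norm_num)
  set F : ℕ → ZMod 16 := fun j =>
    (((2 * (k + 4)).choose (2 * j) : ℕ) : ZMod 16) * ((EZ a (2 * j) : ℤ) : ZMod 16) with hF
  set G : ℕ → ZMod 16 := fun j =>
    (((2 * (k + 4)).choose (2 * j) : ℕ) : ZMod 16) *
      (((a : ZMod 16)) * (2 * a - 1) ^ 3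
        - 2 * (j : ZMod 16) * (2 * (j : ZMod 16) - 1) * ((a : ZMod 16)) ^ 3) with hG
  have hT : ∑ j ∈ Finset.range (k + 4), F j
      = F 0 + F 1 + (0 - (G 0 + G 1) - G (k + 4)) := by
    have hsplitF := Finset.sum_Ico_consecutive F
      (show (0 : ℕ) ≤ 2 by omega) (show 2 ≤ k + 4 by omega)
    have hsplitG := Finset.sum_Ico_consecutive G
      (show (0 : ℕ) ≤ 2 by omega) (show 2 ≤ k + 4 by omega)
    have hr2F : ∑ j ∈ Finset.Ico 0 2, F j = F 0 + F 1 := by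
      rw [← Finset.range_eq_Ico, Finset.sum_range_succ, Finset.sum_range_one]
    have hr2G : ∑ j ∈ Finset.Ico 0 2, G j = G 0 + G 1 := by
      rw [← Finset.range_eq_Ico, Finset.sum_range_succ, Finset.sum_range_one]
    have hmid : ∑ j ∈ Finset.Ico 2 (k + 4), F j = ∑ j ∈ Finset.Ico 2 (k + 4), G j := by
      refine Finset.sum_congr rfl fun j hj => ?_
      obtain ⟨hj1, hj2⟩ := Finset.mem_Ico.mp hj
      have h := (ZMod.intCast_eq_intCast_iff _ _ _).mpr (ih j hj2 hj1)
      push_cast at h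
      simp only [hF, hG]
      rw [h]
    have hfull : ∑ j ∈ Finset.range (k + 4 + 1), G j = 0 := by
      have hexp : ∑ j ∈ Finset.range (k + 4 + 1), G j
          = (∑ j ∈ Finset.range (k + 4 + 1),
              (((2 * (k + 4)).choose (2 * j) : ℕ) : ZMod 16)) * ((a : ZMod 16) * (2 * a - 1) ^ 3)
            - (∑ j ∈ Finset.range (k + 4 + 1),
              (((2 * (k + 4)).choose (2 * j) : ℕ) : ZMod 16) * (2 * (j : ZMod 16))
                * (2 * (j : ZMod 16) - 1)) * ((a : ZMod 16)) ^ 3 := by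
        rw [Finset.sum_mul, Finset.sum_mul, ← Finset.sum_sub_distrib]
        exact Finset.sum_congr rfl fun j _ => by simp only [hG]; ring
      rw [hexp, sum0_zmod (k + 4) (by omega), sum2_zmod (k + 4) (by omega)]
      ring
    have htop : ∑ j ∈ Finset.range (k + 4 + 1), G j
        = ∑ j ∈ Finset.Ico 0 (k + 4), G j + G (k + 4) := by
      rw [← Finset.range_eq_Ico, Finset.sum_range_succ]
    have hIco : ∑ j ∈ Finset.Ico 2 (k + 4), G j = 0 - (G 0 + G 1) - G (k + 4) := by
      rw [← hfull, htop, ← hsplitG, hr2G]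
      ring
    calc ∑ j ∈ Finset.range (k + 4), F j
        = ∑ j ∈ Finset.Ico 0 (k + 4), F j := by rw [← Finset.range_eq_Ico]
      _ = ∑ j ∈ Finset.Ico 0 2, F j + ∑ j ∈ Finset.Ico 2 (k + 4), F j := hsplitF.symm
      _ = F 0 + F 1 + (0 - (G 0 + G 1) - G (k + 4)) := by rw [hr2F, hmid, hIco]
  rw [hT]
  simp only [hF, hG]
  rw [show 2 * 0 = 0 from rfl, show 2 * 1 = 2 from rfl, Nat.choose_zero_right,
    Nat.choose_self, hC1, EZ_zero, EZ_two]
  push_cast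
  have hid : ∀ A x : ZMod 16,
      -A * (1 * 1 + (x + 4) * (2 * x + 7) * (-A)
        + (0 - (1 * (A * (2 * A - 1) ^ 3 - 2 * 0 * (2 * 0 - 1) * A ^ 3)
            + (x + 4) * (2 * x + 7) * (A * (2 * A - 1) ^ 3 - 2 * 1 * (2 * 1 - 1) * A ^ 3))
          - 1 * (A * (2 * A - 1) ^ 3 - 2 * (x + 4) * (2 * (x + 4) - 1) * A ^ 3)))
      = A * (2 * A - 1) ^ 3 - 2 * (x + 4) * (2 * (x + 4) - 1) * A ^ 3 := by decide
  linear_combination hid (a : ZMod 16) (k : ZMod 16)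

theorem stmt16 (a : ℤ) (ha : a ≠ 0) (n : ℕ) (hn : 2 ≤ n) :
    EZ a (2 * n) ≡ 2 * a ^ 2 - a - 2 * a ^ 3 * n [ZMOD 8] ∧
    ∀ b : ℤ, (2 * a - 1) * b ≡ 1 [ZMOD 16] →
      EZ a (2 * n) ≡ a * b - 2 * n * (2 * n - 1) * a ^ 3 [ZMOD 16] := by
  have hkey := key a n hn
  constructor
  · have h8 := hkey.of_dvd (by norm_num : (8 : ℤ) ∣ 16)
    refine h8.trans ?_
    have hcast : ∀ x y : ℤ, x ≡ y [ZMOD (8 : ℤ)] ↔ (x : ZMod 8) = (y : ZMod 8) :=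
      fun x y => (ZMod.intCast_eq_intCast_iff x y 8).symm
    rw [hcast]
    push_cast
    have hid : ∀ A x : ZMod 8,
        A * (2 * A - 1) ^ 3 - 2 * x * (2 * x - 1) * A ^ 3 = 2 * A ^ 2 - A - 2 * A ^ 3 * x := by
      decide
    linear_combination hid (a : ZMod 8) (n : ZMod 8)
  · intro b hb
    refine hkey.trans ?_
    have hcast : ∀ x y : ℤ, x ≡ y [ZMOD (16 : ℤ)] ↔ (x : ZMod 16) = (y : ZMod 16) :=
      fun x y => (ZMod.intCast_eq_intCast_iff x y 16).symm
    rw [hcast] at hb ⊢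
    push_cast at hb ⊢
    have h4 : (2 * (a : ZMod 16) - 1) ^ 4 = 1 := by
      have h : ∀ A : ZMod 16, (2 * A - 1) ^ 4 = 1 := by decide
      exact h _
    have hbval : (b : ZMod 16) = (2 * (a : ZMod 16) - 1) ^ 3 := by
      calc (b : ZMod 16) = (2 * (a : ZMod 16) - 1) ^ 4 * b := by rw [h4, one_mul]
        _ = (2 * (a : ZMod 16) - 1) ^ 3 * ((2 * a - 1) * b) := by ring
        _ = (2 * (a : ZMod 16) - 1) ^ 3 := by rw [hb, mul_one]
    rw [hbval]
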